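/- arXiv:0904.3355 — 3 statements merged into one kernel-verified Lean document; each statement's English description precedes it below -/
import Mathlib

section
/- Let A ∈ GL_m(k) where k is a δ-field of characteristic 0, and let X be an invertible matrix over a δ-extension with σ(X) = AX and σ commuting with δ. Then for each n, the block lower-triangular matrix 𝒳 with (i,j)-block equal to (i choose j)·X⁽ⁱ⁻ʲ⁾ for i ≥ j (and 0 otherwise) satisfies σ(𝒳) = 𝒜·𝒳, where 𝒜 is the block lower-triangular matrix with (i,j)-block (i choose j)·A⁽ⁱ⁻ʲ⁾. -/
section Aux

variable {m : ℕ} {R : Type*} [CommRing R] (δ : Derivation ℤ R R)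

/-- entrywise derivative -/
def dmapAux (δ : Derivation ℤ R R) (M : Matrix (Fin m) (Fin m) R) :
    Matrix (Fin m) (Fin m) R := M.map δ

lemma dmapAux_mul (M N : Matrix (Fin m) (Fin m) R) :
    dmapAux δ (M * N) = dmapAux δ M * N + M * dmapAux δ N := by
  ext a b
  simp only [dmapAux, Matrix.map_apply, Matrix.mul_apply, Matrix.add_apply]
  rw [map_sum, ← Finset.sum_add_distrib]
  refine Finset.sum_congr rfl fun c _ => ?_
  rw [Derivation.leibniz, smul_eq_mul, smul_eq_mul]
  ring

lemma dmapAux_smul (c : ℕ) (M : Matrix (Fin m) (Fin m) R) :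
    dmapAux δ (c • M) = c • dmapAux δ M := by
  ext a b
  exact map_nsmul δ c (M a b)

lemma dmapAux_sum {ι : Type*} (s : Finset ι) (f : ι → Matrix (Fin m) (Fin m) R) :
    dmapAux δ (∑ i ∈ s, f i) = ∑ i ∈ s, dmapAux δ (f i) := by
  ext a b
  simp [dmapAux, Matrix.map_apply, Matrix.sum_apply]

lemma dmapAux_leibniz (M N : Matrix (Fin m) (Fin m) R) (r : ℕ) :
    (dmapAux δ)^[r] (M * N)
      = ∑ s ∈ Finset.range (r + 1),
          r.choose s • ((dmapAux δ)^[s] M * (dmapAux δ)^[r - s] N) := by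
  induction r with
  | zero => simp
  | succ r ih =>
    rw [Function.iterate_succ_apply', ih, dmapAux_sum]
    have step : ∀ s ∈ Finset.range (r + 1),
        dmapAux δ (r.choose s • ((dmapAux δ)^[s] M * (dmapAux δ)^[r - s] N))
          = r.choose s • ((dmapAux δ)^[s + 1] M * (dmapAux δ)^[r - s] N)
            + r.choose s • ((dmapAux δ)^[s] M * (dmapAux δ)^[r + 1 - s] N) := by
      intro s hs
      rw [Finset.mem_range] at hs
      have hs' : s ≤ r := Nat.lt_succ_iff.mp hs
      rw [dmapAux_smul, dmapAux_mul, smul_add, show r + 1 - s = (r - s) + 1 by omega,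
        Function.iterate_succ_apply', Function.iterate_succ_apply']
    rw [Finset.sum_congr rfl step, Finset.sum_add_distrib]
    -- RHS : split off via sum_range_succ'
    rw [Finset.sum_range_succ' (fun s => (r+1).choose s •
      ((dmapAux δ)^[s] M * (dmapAux δ)^[r + 1 - s] N)) (r+1)]
    simp only [Nat.choose_succ_succ', Nat.choose_zero_right, one_smul, add_smul,
      Nat.succ_sub_succ]
    rw [Finset.sum_add_distrib]
    have h2 : ∑ s ∈ Finset.range (r + 1),
        r.choose s • ((dmapAux δ)^[s] M * (dmapAux δ)^[r + 1 - s] N)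
        = (∑ s ∈ Finset.range r,
            r.choose (s+1) • ((dmapAux δ)^[s+1] M * (dmapAux δ)^[r - s] N))
          + ((dmapAux δ)^[0] M * (dmapAux δ)^[r + 1] N) := by
      rw [Finset.sum_range_succ' (fun s => r.choose s •
        ((dmapAux δ)^[s] M * (dmapAux δ)^[r + 1 - s] N)) r]
      simp [Nat.succ_sub_succ]
    have h3 : ∑ s ∈ Finset.range (r + 1),
        r.choose (s+1) • ((dmapAux δ)^[s+1] M * (dmapAux δ)^[r - s] N)
        = ∑ s ∈ Finset.range r,
            r.choose (s+1) • ((dmapAux δ)^[s+1] M * (dmapAux δ)^[r - s] N) := by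
      rw [Finset.sum_range_succ, Nat.choose_succ_self, zero_smul, add_zero]
    rw [h2, h3]
    abel

lemma dmapAux_commσ (σ : R ≃+* R) (hcomm : ∀ x : R, σ (δ x) = δ (σ x))
    (r : ℕ) (M : Matrix (Fin m) (Fin m) R) :
    ((dmapAux δ)^[r] M).map σ = (dmapAux δ)^[r] (M.map σ) := by
  induction r generalizing M with
  | zero => rfl
  | succ r ih =>
    rw [Function.iterate_succ_apply', Function.iterate_succ_apply', ← ih]
    ext a b
    simp [dmapAux, Matrix.map_apply, hcomm]

end Aux

/-- With `σ(X) = AX` and `σδ = δσ`, for each `n` the block lower-triangular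
matrix `𝒳` with `(i,j)`-block `(i choose j)·X⁽ⁱ⁻ʲ⁾` satisfies `σ(𝒳) = 𝒜·𝒳`, where `𝒜`
has `(i,j)`-block `(i choose j)·A⁽ⁱ⁻ʲ⁾`. -/
theorem stmt4 {k R : Type*} [Field k] [CharZero k] [CommRing R] [Algebra k R]
    (σ : R ≃+* R) (δ : Derivation ℤ R R)
    (hcomm : ∀ x : R, σ (δ x) = δ (σ x))
    {m : ℕ} (A : Matrix (Fin m) (Fin m) k) (hA : IsUnit A.det)
    (X : Matrix (Fin m) (Fin m) R) (hX : IsUnit X.det)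
    (hσX : X.map σ = A.map (algebraMap k R) * X) (n : ℕ) :
    letI d : Matrix (Fin m) (Fin m) R → Matrix (Fin m) (Fin m) R := fun M => M.map δ
    letI 𝒳 : Matrix (Fin (n + 1) × Fin m) (Fin (n + 1) × Fin m) R := fun p q =>
      if (q.1 : ℕ) ≤ (p.1 : ℕ) then
        ((p.1 : ℕ).choose (q.1 : ℕ)) • (d^[(p.1 : ℕ) - (q.1 : ℕ)] X) p.2 q.2
      else 0
    letI 𝒜 : Matrix (Fin (n + 1) × Fin m) (Fin (n + 1) × Fin m) R := fun p q =>
      if (q.1 : ℕ) ≤ (p.1 : ℕ) then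
        ((p.1 : ℕ).choose (q.1 : ℕ)) •
          (d^[(p.1 : ℕ) - (q.1 : ℕ)] (A.map (algebraMap k R))) p.2 q.2
      else 0
    𝒳.map σ = 𝒜 * 𝒳 := by
  have hd : (fun M : Matrix (Fin m) (Fin m) R => M.map ⇑δ) = dmapAux δ := rfl
  set A' : Matrix (Fin m) (Fin m) R := A.map (algebraMap k R) with hA'
  ext ⟨i, a⟩ ⟨j, b⟩
  erw [Matrix.map_apply, Matrix.mul_apply]
  simp only [Matrix.map_apply, Matrix.mul_apply, hd, Fintype.sum_prod_type]
  set F : ℕ → R := fun l => if (j:ℕ) ≤ l ∧ l ≤ (i:ℕ) then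
      (((i:ℕ).choose l * l.choose (j:ℕ) : ℕ) : R) *
        ∑ c, ((dmapAux δ)^[(i:ℕ) - l] A') a c * ((dmapAux δ)^[l - (j:ℕ)] X) c b
    else 0 with hF
  have key : ∀ r : ℕ, σ (((dmapAux δ)^[r] X) a b) = ((dmapAux δ)^[r] (A' * X)) a b := by
    intro r
    have h := dmapAux_commσ δ σ hcomm r X
    rw [hσX] at h
    have := congrFun (congrFun h a) b
    simpa [Matrix.map_apply] using this
  have rhs_eq : ∀ l : Fin (n + 1),
      (∑ c, (if (l:ℕ) ≤ (i:ℕ) then (i:ℕ).choose (l:ℕ) • ((dmapAux δ)^[(i:ℕ) - (l:ℕ)] A') a c else 0) *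
        (if (j:ℕ) ≤ (l:ℕ) then (l:ℕ).choose (j:ℕ) • ((dmapAux δ)^[(l:ℕ) - (j:ℕ)] X) c b else 0))
      = F (l:ℕ) := by
    intro l
    simp only [hF]
    by_cases h1 : (l:ℕ) ≤ (i:ℕ)
    · by_cases h2 : (j:ℕ) ≤ (l:ℕ)
      · rw [if_pos (⟨h2, h1⟩ : (j:ℕ) ≤ (l:ℕ) ∧ (l:ℕ) ≤ (i:ℕ)), Finset.mul_sum]
        refine Finset.sum_congr rfl fun c _ => ?_
        rw [if_pos h1, if_pos h2, nsmul_eq_mul, nsmul_eq_mul, Nat.cast_mul]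
        ring
      · rw [if_neg (fun h => h2 h.1)]
        simp only [if_pos h1, if_neg h2, mul_zero, Finset.sum_const_zero]
    · rw [if_neg (fun h => h1 h.2)]
      simp only [if_neg h1, zero_mul, Finset.sum_const_zero]
  simp only [rhs_eq]
  rw [Fin.sum_univ_eq_sum_range F (n + 1)]
  have hsub : Finset.Ico (j:ℕ) ((i:ℕ) + 1) ⊆ Finset.range (n + 1) := by
    intro l hl
    rw [Finset.mem_Ico] at hl
    rw [Finset.mem_range]
    have := i.isLt
    omega
  have hzero : ∀ l ∈ Finset.range (n + 1), l ∉ Finset.Ico (j:ℕ) ((i:ℕ) + 1) → F l = 0 := by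
    intro l _ hl
    rw [Finset.mem_Ico] at hl
    simp only [hF]
    exact if_neg (by omega)
  rw [← Finset.sum_subset hsub hzero, Finset.sum_Ico_eq_sum_range]
  by_cases hij : (j : ℕ) ≤ (i : ℕ)
  · rw [if_pos hij, map_nsmul, key ((i:ℕ) - (j:ℕ)), dmapAux_leibniz, Matrix.sum_apply,
      Finset.smul_sum, ← Finset.sum_range_reflect,
      show (i:ℕ) + 1 - (j:ℕ) = (i:ℕ) - (j:ℕ) + 1 by omega]
    refine Finset.sum_congr rfl fun s hs => ?_
    rw [Finset.mem_range] at hs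
    have hs' : s ≤ (i:ℕ) - (j:ℕ) := Nat.lt_succ_iff.mp hs
    simp only [hF]
    rw [if_pos ⟨Nat.le_add_right _ _, by omega⟩]
    have e1 : (i:ℕ) - (j:ℕ) + 1 - 1 - s = (i:ℕ) - (j:ℕ) - s := by omega
    have e2 : (i:ℕ) - (j:ℕ) - ((i:ℕ) - (j:ℕ) - s) = s := by omega
    have e3 : (i:ℕ) - ((j:ℕ) + s) = (i:ℕ) - (j:ℕ) - s := by omega
    have e4 : (j:ℕ) + s - (j:ℕ) = s := by omega
    have hc : (i:ℕ).choose ((j:ℕ) + s) * ((j:ℕ) + s).choose (j:ℕ)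
        = (i:ℕ).choose (j:ℕ) * ((i:ℕ) - (j:ℕ)).choose s := by
      have := Nat.choose_mul (n := (i:ℕ)) (Nat.le_add_right (j:ℕ) s)
      simpa [e4] using this
    rw [e1, e3, e4, hc, Matrix.smul_apply, Matrix.mul_apply, smul_smul, e2,
      Nat.choose_symm hs', nsmul_eq_mul]
  · rw [if_neg hij, map_zero]
    rw [show (i:ℕ) + 1 - (j:ℕ) = 0 by omega]
    simp
end

section
/- Let B, C be m×m matrices over a differential ring (R,δ). Define for each n the (n+1)×(n+1) block lower-triangular matrix Φ_n(B) with (i,j)-block (i choose j)·B⁽ⁱ⁻ʲ⁾. Then Φ_n(BC) = Φ_n(B)·Φ_n(C), i.e., Φ_n is multiplicative. -/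
open Finset

section aux
variable {R : Type*} [CommRing R] (δ : Derivation ℤ R R) {m : ℕ}

private def dm : Matrix (Fin m) (Fin m) R → Matrix (Fin m) (Fin m) R := fun M => M.map δ

private lemma dm_add (X Y : Matrix (Fin m) (Fin m) R) : dm δ (X + Y) = dm δ X + dm δ Y := by
  ext a b; simp [dm]

private lemma dm_smul (c : ℕ) (X : Matrix (Fin m) (Fin m) R) : dm δ (c • X) = c • dm δ X := by
  ext a b
  simp only [dm, Matrix.map_apply, Matrix.smul_apply]
  simpa using δ.toLinearMap.toAddMonoidHom.map_nsmul (X a b) c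

private lemma dm_sum {ι : Type*} (s : Finset ι) (f : ι → Matrix (Fin m) (Fin m) R) :
    dm δ (∑ i ∈ s, f i) = ∑ i ∈ s, dm δ (f i) := by
  ext a b; simp [dm, Matrix.sum_apply]

private lemma dm_mul (X Y : Matrix (Fin m) (Fin m) R) :
    dm δ (X * Y) = dm δ X * Y + X * dm δ Y := by
  ext a b
  simp [dm, Matrix.mul_apply, Finset.sum_add_distrib, mul_comm]
  exact add_comm _ _

private lemma dm_iterate_mul (X Y : Matrix (Fin m) (Fin m) R) (n : ℕ) :
    (dm δ)^[n] (X * Y) =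
      ∑ k ∈ range n.succ, (n.choose k • ((dm δ)^[n - k] X * (dm δ)^[k] Y)) := by
  induction n with
  | zero => simp [Finset.range]
  | succ n IH =>
    calc
      (dm δ)^[n + 1] (X * Y) =
          dm δ (∑ k ∈ range n.succ,
              n.choose k • ((dm δ)^[n - k] X * (dm δ)^[k] Y)) := by
        rw [Function.iterate_succ_apply', IH]
      _ = (∑ k ∈ range n.succ,
            n.choose k • ((dm δ)^[n - k + 1] X * (dm δ)^[k] Y)) +
          ∑ k ∈ range n.succ,
            n.choose k • ((dm δ)^[n - k] X * (dm δ)^[k + 1] Y) := by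
        rw [dm_sum]
        simp_rw [dm_smul, dm_mul, Function.iterate_succ_apply',
          smul_add, sum_add_distrib]
      _ = (∑ k ∈ range n.succ,
                n.choose k.succ • ((dm δ)^[n - k] X * (dm δ)^[k + 1] Y)) +
              1 • ((dm δ)^[n + 1] X * (dm δ)^[0] Y) +
            ∑ k ∈ range n.succ, n.choose k • ((dm δ)^[n - k] X * (dm δ)^[k + 1] Y) :=
        ?_
      _ = ((∑ k ∈ range n.succ, n.choose k • ((dm δ)^[n - k] X * (dm δ)^[k + 1] Y)) +
              ∑ k ∈ range n.succ,
                n.choose k.succ • ((dm δ)^[n - k] X * (dm δ)^[k + 1] Y)) +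
            1 • ((dm δ)^[n + 1] X * (dm δ)^[0] Y) := by
        rw [add_comm, add_assoc]
      _ = (∑ i ∈ range n.succ,
              (n + 1).choose (i + 1) • ((dm δ)^[n + 1 - (i + 1)] X * (dm δ)^[i + 1] Y)) +
            1 • ((dm δ)^[n + 1] X * (dm δ)^[0] Y) := by
        simp_rw [Nat.choose_succ_succ, Nat.succ_sub_succ, add_smul, sum_add_distrib]
      _ = ∑ k ∈ range n.succ.succ,
            n.succ.choose k • ((dm δ)^[n.succ - k] X * (dm δ)^[k] Y) := by
        rw [sum_range_succ' _ n.succ, Nat.choose_zero_right, tsub_zero]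
    congr
    refine (sum_range_succ' _ _).trans (congr_arg₂ (· + ·) ?_ ?_)
    · rw [sum_range_succ, Nat.choose_succ_self, zero_smul, add_zero]
      refine sum_congr rfl fun k hk => ?_
      rw [mem_range] at hk
      congr
      omega
    · rw [Nat.choose_zero_right, tsub_zero]

end aux

/-- For `m×m` matrices `B, C` over a differential ring `(R, δ)`, the map
`Φ_n` sending `M` to the `(n+1)×(n+1)` block lower-triangular matrix with `(i,j)`-block
`(i choose j)·M⁽ⁱ⁻ʲ⁾` is multiplicative: `Φ_n(BC) = Φ_n(B)·Φ_n(C)`. -/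
theorem stmt6 {R : Type*} [CommRing R] (δ : Derivation ℤ R R)
    {m : ℕ} (B C : Matrix (Fin m) (Fin m) R) (n : ℕ) :
    letI d : Matrix (Fin m) (Fin m) R → Matrix (Fin m) (Fin m) R := fun M => M.map δ
    letI Φ : Matrix (Fin m) (Fin m) R →
        Matrix (Fin (n + 1) × Fin m) (Fin (n + 1) × Fin m) R := fun M p q =>
      if (q.1 : ℕ) ≤ (p.1 : ℕ) then
        ((p.1 : ℕ).choose (q.1 : ℕ)) • (d^[(p.1 : ℕ) - (q.1 : ℕ)] M) p.2 q.2
      else 0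
    Φ (B * C) = Φ B * Φ C := by
  ext ⟨i, a⟩ ⟨j, b⟩
  erw [Matrix.mul_apply, Fintype.sum_prod_type]
  simp only []
  rw [show (fun M : Matrix (Fin m) (Fin m) R => M.map ⇑δ) = dm δ from rfl]
  set g : ℕ → R := fun k => if (j:ℕ) ≤ k ∧ k ≤ (i:ℕ) then
      ((i:ℕ).choose k * k.choose (j:ℕ)) • (((dm δ)^[(i:ℕ) - k] B * (dm δ)^[k - (j:ℕ)] C) a b)
    else 0 with hg
  have key : ∀ x : Fin (n+1),
      (∑ s : Fin m, (if (x:ℕ) ≤ (i:ℕ) then (i:ℕ).choose (x:ℕ) • (dm δ)^[(i:ℕ) - (x:ℕ)] B a s else 0) *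
          (if (j:ℕ) ≤ (x:ℕ) then (x:ℕ).choose (j:ℕ) • (dm δ)^[(x:ℕ) - (j:ℕ)] C s b else 0)) = g (x:ℕ) := by
    intro x
    by_cases h1 : (x:ℕ) ≤ (i:ℕ) <;> by_cases h2 : (j:ℕ) ≤ (x:ℕ) <;>
        simp only [hg, h1, h2, if_true, if_false, ite_true, ite_false, and_true, true_and,
          and_false, false_and, if_neg, mul_zero, zero_mul, Finset.sum_const_zero] <;>
      try rfl
    · rw [Matrix.mul_apply, Finset.smul_sum]
      refine Finset.sum_congr rfl fun s _ => ?_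
      simp only [nsmul_eq_mul]
      push_cast
      ring
  rw [Finset.sum_congr rfl fun x _ => key x]
  rw [Fin.sum_univ_eq_sum_range g (n+1)]
  have hsub : Finset.Icc (j:ℕ) (i:ℕ) ⊆ Finset.range (n+1) := by
    intro k hk
    simp only [Finset.mem_Icc] at hk
    simp only [Finset.mem_range]
    omega
  rw [← Finset.sum_subset hsub (by
    intro k _ hk
    simp only [Finset.mem_Icc, not_and_or, not_le] at hk
    rw [hg]
    simp only []
    rw [if_neg (by omega)])]
  have hre : ∑ k ∈ Finset.Icc (j:ℕ) (i:ℕ), g k = ∑ t ∈ Finset.range ((i:ℕ) - (j:ℕ) + 1), g ((j:ℕ) + t) := by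
    by_cases hji : (j:ℕ) ≤ (i:ℕ)
    · refine Finset.sum_nbij' (fun k => k - (j:ℕ)) (fun t => (j:ℕ) + t) ?_ ?_ ?_ ?_ ?_
      · intro k hk; simp only [Finset.mem_Icc] at hk; simp only [Finset.mem_range]; omega
      · intro t ht; simp only [Finset.mem_range] at ht; simp only [Finset.mem_Icc]; omega
      · intro k hk; simp only [Finset.mem_Icc] at hk; (try dsimp only); omega
      · intro t ht; simp only [Finset.mem_range] at ht; (try dsimp only); omega
      · intro k hk; simp only [Finset.mem_Icc] at hk
        (try dsimp only); congr 1; omega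
    · rw [Finset.Icc_eq_empty (by omega), Finset.sum_empty]
      have : (i:ℕ) - (j:ℕ) + 1 = 1 := by omega
      rw [this, Finset.sum_range_one, hg]
      simp only []
      rw [if_neg (by omega)]
  rw [hre]
  by_cases hji : (j:ℕ) ≤ (i:ℕ)
  · rw [if_pos hji]
    rw [dm_iterate_mul δ B C ((i:ℕ) - (j:ℕ))]
    have hlen : ((i:ℕ) - (j:ℕ)).succ = (i:ℕ) - (j:ℕ) + 1 := rfl
    rw [hlen, Matrix.sum_apply, Finset.smul_sum]
    refine Finset.sum_congr rfl fun t ht => ?_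
    simp only [Finset.mem_range] at ht
    rw [hg]
    simp only []
    rw [if_pos ⟨Nat.le_add_right _ _, by omega⟩]
    have h1 : (j:ℕ) + t - (j:ℕ) = t := by omega
    have h2 : (i:ℕ) - ((j:ℕ) + t) = (i:ℕ) - (j:ℕ) - t := by omega
    have hc : (i:ℕ).choose ((j:ℕ) + t) * ((j:ℕ) + t).choose (j:ℕ)
        = (i:ℕ).choose (j:ℕ) * ((i:ℕ) - (j:ℕ)).choose t := by
      rw [Nat.choose_mul (Nat.le_add_right _ _)]
      have ht' : (j:ℕ) + t - (j:ℕ) = t := by omega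
      rw [ht']
    rw [h1, h2, hc, Matrix.smul_apply, smul_smul]
  · rw [if_neg hji]
    have : (i:ℕ) - (j:ℕ) + 1 = 1 := by omega
    rw [this, Finset.sum_range_one, hg]
    simp only []
    rw [if_neg (by omega)]
end

section
/- Let R be a σ-simple σδ-ring containing a σδ-field with σ-constants C, and let Ĉ be a σδ-field extension of C on which σ acts as the identity, with C relatively algebraically closed appropriately. Then R ⊗_C Ĉ is a simple σδ-ring. -/
open scoped TensorProduct

/-- Let `R` be a `σ`-simple `σδ`-ring whose field of `σ`-constants is `C`,
and `Ĉ` a `δ`-field extension of `C` on which `σ` acts as the identity.  Then `R ⊗_C Ĉ`,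
with the induced automorphism `σ ⊗ id` and derivation `δ ⊗ 1 + 1 ⊗ δ`, is a simple
`σδ`-ring. -/
theorem stmt14 {C R Chat : Type*} [Field C] [CommRing R] [Field Chat]
    [Algebra C R] [Algebra C Chat]
    (σ : R ≃+* R) (δ : Derivation ℤ R R)
    (hcomm : ∀ x : R, σ (δ x) = δ (σ x))
    -- `C` is the field of `σ`-constants of `R`
    (hC : ∀ x : R, σ x = x ↔ x ∈ Set.range (algebraMap C R))
    -- `δ` restricts to a derivation `dC` on `C`, and `δChat` extends it to `Ĉ`
    (dC : C → C) (hdC : ∀ c : C, δ (algebraMap C R c) = algebraMap C R (dC c))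
    (δChat : Derivation ℤ Chat Chat)
    (hδChat : ∀ c : C, δChat (algebraMap C Chat c) = algebraMap C Chat (dC c))
    -- `R` is `σ`-simple
    (hσsimple : ∀ I : Ideal R, (∀ x ∈ I, σ x ∈ I) → I = ⊥ ∨ I = ⊤)
    -- the induced automorphism `σ ⊗ id` and derivation on `S = R ⊗_C Ĉ`
    (σS : R ⊗[C] Chat ≃+* R ⊗[C] Chat)
    (hσS : ∀ (x : R) (y : Chat), σS (x ⊗ₜ[C] y) = σ x ⊗ₜ[C] y)
    (δS : Derivation ℤ (R ⊗[C] Chat) (R ⊗[C] Chat))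
    (hδS : ∀ (x : R) (y : Chat), δS (x ⊗ₜ[C] y) = δ x ⊗ₜ[C] y + x ⊗ₜ[C] δChat y) :
    ∀ I : Ideal (R ⊗[C] Chat), (∀ x ∈ I, σS x ∈ I) → (∀ x ∈ I, δS x ∈ I) →
      I = ⊥ ∨ I = ⊤ := by
  classical
  intro I hσI _hδI
  by_cases hbot : I = ⊥
  · exact Or.inl hbot
  right
  rcases subsingleton_or_nontrivial (R ⊗[C] Chat) with hS | hS
  · rw [eq_top_iff]
    intro x _
    have : x = (0 : R ⊗[C] Chat) := Subsingleton.elim _ _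
    rw [this]; exact I.zero_mem
  have hRnt : Nontrivial R := (algebraMap R (R ⊗[C] Chat)).domain_nontrivial
  -- σ fixes the image of C
  have hσC : ∀ c : C, σ (algebraMap C R c) = algebraMap C R c := fun c =>
    (hC _).mpr ⟨c, rfl⟩
  have hσsmul : ∀ (c : C) (r : R), σ (c • r) = c • σ r := by
    intro c r
    rw [Algebra.smul_def, Algebra.smul_def, map_mul, hσC]
  -- a basis of Ĉ over C, base changed to an R-basis of S
  set B := Module.Basis.ofVectorSpace C Chat with hB
  set B' := B.baseChange R with hB'
  -- σS acts coordinatewise as σ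
  have hrepr : ∀ (x : R ⊗[C] Chat) (j), B'.repr (σS x) j = σ (B'.repr x j) := by
    intro x
    induction x using TensorProduct.induction_on with
    | zero => intro j; simp
    | tmul r c =>
      intro j
      rw [hσS, hB', Module.Basis.baseChange_repr_tmul, Module.Basis.baseChange_repr_tmul, hσsmul]
    | add x y hx hy =>
      intro j
      rw [map_add, map_add, map_add, Finsupp.add_apply, Finsupp.add_apply, hx, hy, map_add]
  -- pick a nonzero element of I of minimal support
  obtain ⟨x₀, hx₀I, hx₀⟩ := Submodule.exists_mem_ne_zero_of_ne_bot hbot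
  have hex : ∃ n, ∃ x, x ∈ I ∧ x ≠ 0 ∧ (B'.repr x).support.card = n :=
    ⟨_, x₀, hx₀I, hx₀, rfl⟩
  set n := sInf {n | ∃ x, x ∈ I ∧ x ≠ 0 ∧ (B'.repr x).support.card = n} with hn
  obtain ⟨x, hxI, hx0, hxcard⟩ := Nat.sInf_mem hex
  have hmin : ∀ y, y ∈ I → y ≠ 0 → n ≤ (B'.repr y).support.card := by
    intro y hy hy0
    exact Nat.sInf_le ⟨y, hy, hy0, rfl⟩
  set s := (B'.repr x).support with hs
  have hsne : s.Nonempty := by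
    rw [hs, Finsupp.support_nonempty_iff]
    simpa using hx0
  obtain ⟨i₀, hi₀⟩ := hsne
  -- the ideal of i₀-coordinates of elements of I supported in s
  let J : Ideal R :=
    { carrier := {r | ∃ y, y ∈ I ∧ (B'.repr y).support ⊆ s ∧ B'.repr y i₀ = r}
      add_mem' := by
        rintro a b ⟨y, hy, hys, rfl⟩ ⟨z, hz, hzs, rfl⟩
        refine ⟨y + z, I.add_mem hy hz, ?_, by simp⟩
        rw [map_add]
        exact Finsupp.support_add.trans (Finset.union_subset hys hzs)
      zero_mem' := ⟨0, I.zero_mem, by simp, by simp⟩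
      smul_mem' := by
        rintro r a ⟨y, hy, hys, rfl⟩
        refine ⟨r • y, ?_, ?_, ?_⟩
        · rw [Algebra.smul_def]
          exact I.mul_mem_left _ hy
        · rw [map_smul]
          exact (Finsupp.support_smul).trans hys
        · rw [map_smul]
          simp [smul_eq_mul] }
  have hJσ : ∀ r ∈ J, σ r ∈ J := by
    rintro r ⟨y, hy, hys, rfl⟩
    refine ⟨σS y, hσI y hy, ?_, hrepr y i₀⟩
    intro j hj
    apply hys
    rw [Finsupp.mem_support_iff] at hj ⊢
    intro h0
    exact hj (by rw [hrepr, h0, map_zero])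
  have hJtop : J = ⊤ := by
    rcases hσsimple J hJσ with h | h
    · exfalso
      have : B'.repr x i₀ ∈ J := ⟨x, hxI, le_refl _, rfl⟩
      rw [h] at this
      rw [Finsupp.mem_support_iff] at hi₀
      exact hi₀ (by simpa using this)
    · exact h
  have h1J : (1 : R) ∈ J := hJtop ▸ Submodule.mem_top
  obtain ⟨y, hyI, hys, hyi₀⟩ := h1J
  have hy0 : y ≠ 0 := by
    intro h
    rw [h] at hyi₀
    simp at hyi₀
  -- the support of y is exactly s
  have hycard : (B'.repr y).support = s := by
    apply Finset.eq_of_subset_of_card_le hys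
    rw [hxcard]
    exact hmin y hyI hy0
  -- σS y - y ∈ I has strictly smaller support, hence is 0
  have hfix : ∀ j, σ (B'.repr y j) = B'.repr y j := by
    have hz : σS y - y = 0 := by
      by_contra hz0
      have hzI : σS y - y ∈ I := I.sub_mem (hσI y hyI) hyI
      have hle : (B'.repr (σS y - y)).support ⊆ s.erase i₀ := by
        intro j hj
        rw [Finsupp.mem_support_iff, map_sub, Finsupp.sub_apply, hrepr] at hj
        rcases eq_or_ne j i₀ with rfl | hji
        · exfalso
          rw [hyi₀, map_one, sub_self] at hj
          exact hj rfl
        · refine Finset.mem_erase.mpr ⟨hji, ?_⟩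
          rw [← hycard, Finsupp.mem_support_iff]
          intro h0
          rw [h0, map_zero, sub_zero] at hj
          exact hj rfl
      have hcard : (B'.repr (σS y - y)).support.card < n := by
        calc (B'.repr (σS y - y)).support.card ≤ (s.erase i₀).card :=
              Finset.card_le_card hle
          _ < s.card := Finset.card_erase_lt_of_mem hi₀
          _ = n := hxcard
      exact absurd (hmin _ hzI hz0) (not_le.mpr hcard)
    intro j
    have := congrArg (fun t => B'.repr t j) hz
    simp only [map_sub, Finsupp.sub_apply, map_zero, Finsupp.coe_zero, Pi.zero_apply] at this
    rw [hrepr] at this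
    exact sub_eq_zero.mp this
  -- each coordinate of y lies in C
  have hcoord : ∀ j, ∃ c : C, algebraMap C R c = B'.repr y j := by
    intro j
    exact Set.mem_range.mp ((hC _).mp (hfix j))
  choose c hc using hcoord
  -- y = 1 ⊗ w  for w = ∑ j in s, c j • B j
  set w : Chat := ∑ j ∈ s, c j • B j with hw
  have hreprw : ∀ j, B.repr w j = if j ∈ s then c j else 0 := by
    intro j
    rw [hw, map_sum]
    rw [Finsupp.finset_sum_apply]
    rw [Finset.sum_congr rfl (fun k _ => by
      rw [map_smul, Module.Basis.repr_self, Finsupp.smul_apply, Finsupp.single_apply, smul_eq_mul])]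
    simp [Finset.sum_ite_eq' s j (fun k => c k * 1)]
  have hyw : y = (1 : R) ⊗ₜ[C] w := by
    apply B'.repr.injective
    ext j
    rw [hB', Module.Basis.baseChange_repr_tmul, hreprw]
    by_cases hjs : j ∈ s
    · rw [if_pos hjs, Algebra.smul_def, mul_one, hc]
    · rw [if_neg hjs, zero_smul]
      have : j ∉ (B'.repr y).support := by rw [hycard]; exact hjs
      rw [Finsupp.notMem_support_iff] at this
      rw [this]
  have hwne : w ≠ 0 := by
    intro h0
    have h1 : B.repr w i₀ = c i₀ := by rw [hreprw, if_pos hi₀]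
    rw [h0, map_zero] at h1
    have : algebraMap C R (c i₀) = 1 := by rw [hc]; exact hyi₀
    rw [← h1] at this
    simp at this
  have h1I : (1 : R ⊗[C] Chat) ∈ I := by
    have := I.mul_mem_left ((1 : R) ⊗ₜ[C] w⁻¹) (hyw ▸ hyI)
    rwa [Algebra.TensorProduct.tmul_mul_tmul, one_mul, inv_mul_cancel₀ hwne,
      ← Algebra.TensorProduct.one_def] at this
  exact (Ideal.eq_top_iff_one I).mpr h1I
end
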